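/- Let R be a generically Gorenstein 1-dimensional Cohen–Macaulay Noetherian ring and let R ⊆ S ⊆ Q(R) be a module finite birational extension such that S is a reflexive R-module. Then every finitely generated R-module M that fits in an exact sequence 0 → M → S^a → N → 0 of S-modules with N a torsion-free (equivalently, maximal Cohen–Macaulay) S-module also fits in an exact sequence 0 → M → R^c → Y → 0 of R-modules with Y a torsion-free (equivalently, maximal Cohen–Macaulay) R-module; that is, Ω CM(S) ⊆ Ω CM(R). -/

import Mathlib

set_option maxHeartbeats 1000000
set_option synthInstance.maxHeartbeats 400000

open CategoryTheory

universe u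

/-- The `i`-th Ext module `Ext_A^i(M, N)` over a commutative ring `A`. -/
noncomputable def ExtModule (A : Type u) [CommRing A] (M N : Type u)
    [AddCommGroup M] [Module A M] [AddCommGroup N] [Module A N] (i : ℕ) : ModuleCat.{u} A :=
  ((Ext A (ModuleCat.{u} A) i).obj (Opposite.op (ModuleCat.of A M))).obj (ModuleCat.of A N)

/-- A module is torsion-free if nonzerodivisors of the ring act injectively. -/
def IsTorsionFreeModule (A : Type*) [CommRing A] (M : Type*) [AddCommGroup M]
    [Module A M] : Prop :=
  ∀ a ∈ nonZeroDivisors A, ∀ m : M, a • m = 0 → m = 0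

/-- The grade of an ideal `J`: the length of a maximal regular sequence contained in `J`. -/
noncomputable def Ideal.grade {A : Type*} [CommRing A] (J : Ideal A) : ℕ∞ :=
  sSup {n : ℕ∞ | ∃ rs : List A, (rs.length : ℕ∞) = n ∧ (∀ r ∈ rs, r ∈ J) ∧
    RingTheory.Sequence.IsWeaklyRegular A rs}

/-- A Cohen–Macaulay local ring: Noetherian local with depth equal to Krull dimension. -/
def IsCohenMacaulayLocalRing (A : Type*) [CommRing A] : Prop :=
  IsNoetherianRing A ∧ ∃ _ : IsLocalRing A,
    ((IsLocalRing.maximalIdeal A).grade : WithBot ℕ∞) = ringKrullDim A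

/-- A Cohen–Macaulay ring: Noetherian, all localizations at primes are CM local rings. -/
def IsCohenMacaulayRing (A : Type*) [CommRing A] : Prop :=
  IsNoetherianRing A ∧ ∀ (p : Ideal A) [p.IsPrime],
    IsCohenMacaulayLocalRing (Localization.AtPrime p)

/-- A Gorenstein local ring: Noetherian local of finite self-injective dimension,
expressed via vanishing of `Ext^{n+1}(A/I, A)` for all ideals `I` (Baer's criterion). -/
def IsGorensteinLocalRing (A : Type u) [CommRing A] : Prop :=
  IsLocalRing A ∧ IsNoetherianRing A ∧
    ∃ n : ℕ, ∀ I : Ideal A, Subsingleton (ExtModule A (A ⧸ I) A (n + 1))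

/-- A Gorenstein ring: Noetherian, all localizations at maximal ideals are Gorenstein local. -/
def IsGorensteinRing (A : Type u) [CommRing A] : Prop :=
  IsNoetherianRing A ∧ ∀ (m : Ideal A) [m.IsMaximal],
    IsGorensteinLocalRing (Localization.AtPrime m)

/-- Generically Gorenstein: the localization at every associated prime is Gorenstein. -/
def IsGenericallyGorenstein (A : Type u) [CommRing A] : Prop :=
  ∀ (p : Ideal A) [p.IsPrime], p ∈ associatedPrimes A A →
    IsGorensteinLocalRing (Localization.AtPrime p)

/-- The trace ideal of a module: the sum of the images of all linear maps to the ring. -/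
def traceIdeal (A : Type*) [CommRing A] (M : Type*) [AddCommGroup M] [Module A M] :
    Ideal A :=
  ⨆ f : M →ₗ[A] A, LinearMap.range f

/-- The image of an ideal inside the total ring of fractions. -/
noncomputable def Ideal.toFrac {A : Type u} [CommRing A] (I : Ideal A) :
    Submodule A (FractionRing A) :=
  Submodule.map (Algebra.linearMap A (FractionRing A)) I

/-- The conductor `(R : S)` of a birational extension `R ⊆ S ⊆ Q(R)`,
as a submodule of the total ring of fractions. -/
noncomputable def conductorFrac (R : Type u) [CommRing R]
    (S : Subalgebra R (FractionRing R)) : Submodule R (FractionRing R) :=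
  (1 : Submodule R (FractionRing R)) / Subalgebra.toSubmodule S

/-- `M ∈ Ω CM(A)`: there is an exact sequence `0 → M → P → N → 0` with `P` a finitely
generated projective `A`-module and `N` a finitely generated torsion-free
(equivalently, over a 1-dimensional CM ring, maximal Cohen–Macaulay) `A`-module. -/
def InSyzygyOfCM (A : Type u) [CommRing A] (M : Type u) [AddCommGroup M] [Module A M] :
    Prop :=
  ∃ (P N : Type u) (_ : AddCommGroup P) (_ : Module A P) (_ : AddCommGroup N)
    (_ : Module A N), Module.Projective A P ∧ Module.Finite A P ∧ Module.Finite A N ∧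
      IsTorsionFreeModule A N ∧
      ∃ (f : M →ₗ[A] P) (g : P →ₗ[A] N),
        Function.Injective f ∧ Function.Surjective g ∧ LinearMap.range f = LinearMap.ker g

section Aux

open IsLocalization

variable {R : Type u} [CommRing R]

/-- The image of `R` in its total ring of fractions, as a submodule. -/
noncomputable def Rimg (R : Type u) [CommRing R] : Submodule R (FractionRing R) :=
  LinearMap.range (Algebra.linearMap R (FractionRing R))

/-- The isomorphism of `R` with its image in `Q(R)`. -/
noncomputable def eR (R : Type u) [CommRing R] : R ≃ₗ[R] Rimg R :=
  LinearEquiv.ofInjective (Algebra.linearMap R (FractionRing R))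
    (IsFractionRing.injective R (FractionRing R))

lemma eR_coe (x : R) : ((eR R x : Rimg R) : FractionRing R) = algebraMap R (FractionRing R) x := by
  simp [eR, Rimg]
  exact LinearEquiv.ofInjective_apply _ _

lemma eR_symm_spec (x : Rimg R) :
    algebraMap R (FractionRing R) ((eR R).symm x) = (x : FractionRing R) := by
  conv_rhs => rw [← (eR R).apply_symm_apply x]
  rw [eR_coe]

/-- Corestriction of a map into `Q(R)` with values in `R` to a map into `R`. -/
noncomputable def resR {M₀ : Type*} [AddCommGroup M₀] [Module R M₀]
    (L : M₀ →ₗ[R] FractionRing R) (hL : ∀ m, L m ∈ Rimg R) : M₀ →ₗ[R] R :=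
  (eR R).symm.toLinearMap ∘ₗ L.codRestrict (Rimg R) hL

lemma resR_spec {M₀ : Type*} [AddCommGroup M₀] [Module R M₀]
    (L : M₀ →ₗ[R] FractionRing R) (hL : ∀ m, L m ∈ Rimg R) (m : M₀) :
    algebraMap R (FractionRing R) (resR L hL m) = L m := by
  exact eR_symm_spec (⟨L m, hL m⟩ : Rimg R)

variable (S : Subalgebra R (FractionRing R))

/-- The conductor ideal `(R : S)` of a birational extension, as an ideal of `R`. -/
def condI : Ideal R where
  carrier := {r | ∀ s : S, algebraMap R (FractionRing R) r * (s : FractionRing R) ∈ Rimg R}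
  add_mem' := by
    intro x y hx hy s
    rw [map_add, add_mul]
    exact add_mem (hx s) (hy s)
  zero_mem' := by
    intro s
    rw [map_zero, zero_mul]
    exact zero_mem _
  smul_mem' := by
    intro c x hx s
    have : algebraMap R (FractionRing R) (c • x) * (s : FractionRing R)
        = c • (algebraMap R (FractionRing R) x * (s : FractionRing R)) := by
      rw [smul_eq_mul, map_mul, Algebra.smul_def, mul_assoc]
    rw [this]
    exact Submodule.smul_mem _ c (hx s)

lemma mem_condI {r : R} :
    r ∈ condI S ↔ ∀ s : S, algebraMap R (FractionRing R) r * (s : FractionRing R) ∈ Rimg R :=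
  Iff.rfl

/-- Every `R`-linear functional on `S ⊆ Q(R)` is multiplication by `φ 1`. -/
lemma dual_eq_mul (φ : S →ₗ[R] R) (s : S) :
    algebraMap R (FractionRing R) (φ s)
      = (s : FractionRing R) * algebraMap R (FractionRing R) (φ 1) := by
  obtain ⟨⟨x, t⟩, ht⟩ := IsLocalization.surj (nonZeroDivisors R) (s : FractionRing R)
  have hst : (t : R) • s = algebraMap R S x := by
    apply Subtype.ext
    have h1 : (((t : R) • s : S) : FractionRing R) = (t : R) • (s : FractionRing R) := rfl
    rw [h1, Algebra.smul_def, mul_comm, ht]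
    have : ((algebraMap R S x : S) : FractionRing R) = algebraMap R (FractionRing R) x := by
      rw [Algebra.algebraMap_eq_smul_one, Algebra.algebraMap_eq_smul_one]
      simp [Algebra.smul_def]
    rw [this]
  have h2 : (t : R) • φ s = x • φ 1 := by
    rw [← map_smul, hst, Algebra.algebraMap_eq_smul_one, map_smul]
  have h3 : algebraMap R (FractionRing R) ((t : R) * φ s)
      = algebraMap R (FractionRing R) (x * φ 1) := by
    rw [← smul_eq_mul, ← smul_eq_mul, h2]
  rw [map_mul, map_mul] at h3
  have hu : IsUnit (algebraMap R (FractionRing R) (t : R)) :=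
    IsLocalization.map_units (FractionRing R) t
  apply hu.mul_left_cancel
  rw [h3, ← ht, mul_comm (s : FractionRing R) _, mul_assoc]

/-- `φ 1` lies in the conductor, for every functional `φ : S → R`. -/
lemma dual_one_mem (φ : S →ₗ[R] R) : φ 1 ∈ condI S := by
  intro s
  rw [mul_comm, ← dual_eq_mul]
  exact ⟨φ s, rfl⟩

/-- KEY LEMMA: if `S` is reflexive and `q · (R : S) ⊆ R` then `q ∈ S`. -/
lemma exists_mem_of_cond (hrefl : Module.IsReflexive R S)
    (d : R) (hd0 : d ∈ nonZeroDivisors R)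
    (hdS : ∀ s : S, algebraMap R (FractionRing R) d * (s : FractionRing R) ∈ Rimg R)
    (q : FractionRing R)
    (hq : ∀ t ∈ condI S, algebraMap R (FractionRing R) t * q ∈ Rimg R) :
    ∃ z : S, (z : FractionRing R) = q := by
  haveI := hrefl
  -- the functional "multiplication by d"
  let Ld : S →ₗ[R] FractionRing R := d • S.val.toLinearMap
  have hLd : ∀ s, Ld s ∈ Rimg R := by
    intro s
    have : Ld s = algebraMap R (FractionRing R) d * (s : FractionRing R) := by
      simp [Ld, Algebra.smul_def]
    rw [this]; exact hdS s
  let φd : S →ₗ[R] R := resR Ld hLd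
  have hφd : ∀ s : S, algebraMap R (FractionRing R) (φd s)
      = algebraMap R (FractionRing R) d * (s : FractionRing R) := by
    intro s
    rw [show φd s = resR Ld hLd s from rfl, resR_spec]
    simp [Ld, Algebra.smul_def]
  -- the double-dual element "multiplication by q"
  let ev1 : Module.Dual R S →ₗ[R] R := Module.Dual.eval R S 1
  let Lψ : Module.Dual R S →ₗ[R] FractionRing R :=
    q • ((Algebra.linearMap R (FractionRing R)) ∘ₗ ev1)
  have hLψ : ∀ φ, Lψ φ ∈ Rimg R := by
    intro φ
    have : Lψ φ = algebraMap R (FractionRing R) (φ 1) * q := by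
      simp [Lψ, ev1, smul_eq_mul, mul_comm]
    rw [this]
    exact hq (φ 1) (dual_one_mem S φ)
  let ψ : Module.Dual R (Module.Dual R S) := resR Lψ hLψ
  set s₀ : S := (Module.evalEquiv R S).symm ψ with hs₀
  have key : φd s₀ = ψ φd := Module.apply_evalEquiv_symm_apply R ↥S φd ψ
  refine ⟨s₀, ?_⟩
  have h1 : algebraMap R (FractionRing R) (φd s₀)
      = algebraMap R (FractionRing R) d * (s₀ : FractionRing R) := hφd s₀
  have h2 : algebraMap R (FractionRing R) (ψ φd)
      = algebraMap R (FractionRing R) (φd 1) * q := by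
    rw [show ψ φd = resR Lψ hLψ φd from rfl, resR_spec]
    simp [Lψ, ev1, smul_eq_mul, mul_comm]
  have h3 : algebraMap R (FractionRing R) (φd 1)
      = algebraMap R (FractionRing R) d := by
    rw [hφd 1]; simp
  have hu : IsUnit (algebraMap R (FractionRing R) d) :=
    IsLocalization.map_units (FractionRing R) ⟨d, hd0⟩
  apply hu.mul_left_cancel
  rw [← h1, key, h2, h3]

end Aux
/-- if `S` is a reflexive `R`-module, then `Ω CM(S) ⊆ Ω CM(R)`:
any finitely generated `R`-module `M` sitting in an exact sequence
`0 → M → S^a → N → 0` of `S`-modules with `N` torsion-free over `S` also sits in an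
exact sequence `0 → M → R^c → Y → 0` of `R`-modules with `Y` torsion-free over `R`. -/
theorem syzygyCM_subset_of_reflexive (R : Type u) [CommRing R]
    (hCM : IsCohenMacaulayRing R) (hdim : ringKrullDim R = 1)
    (hGG : IsGenericallyGorenstein R)
    (S : Subalgebra R (FractionRing R)) (hfin : Module.Finite R S)
    (hrefl : Module.IsReflexive R S)
    (M : Type u) [AddCommGroup M] [Module R M] [Module S M] [IsScalarTower R S M]
    (hMfin : Module.Finite R M)
    (a : ℕ) (N : Type u) [AddCommGroup N] [Module S N]
    (hNfin : Module.Finite S N) (hNtf : IsTorsionFreeModule S N)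
    (f : M →ₗ[S] (Fin a → S)) (g : (Fin a → S) →ₗ[S] N)
    (hf : Function.Injective f) (hg : Function.Surjective g)
    (hfg : LinearMap.range f = LinearMap.ker g) :
    ∃ (c : ℕ) (Y : Type u) (_ : AddCommGroup Y) (_ : Module R Y),
      Module.Finite R Y ∧ IsTorsionFreeModule R Y ∧
      ∃ (f' : M →ₗ[R] (Fin c → R)) (g' : (Fin c → R) →ₗ[R] Y),
        Function.Injective f' ∧ Function.Surjective g' ∧
          LinearMap.range f' = LinearMap.ker g' := by  classical
  obtain ⟨hNoeth, -⟩ := hCM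
  haveI : IsNoetherianRing R := hNoeth
  -- the embedding of S into the fraction field, R-linearly
  set σ : S →ₗ[R] FractionRing R := S.val.toLinearMap with hσdef
  have hσinj : Function.Injective σ := Subtype.val_injective
  have hσ : ∀ s : S, σ s = (s : FractionRing R) := fun _ => rfl
  -- a common denominator `d` for `S`
  obtain ⟨d, hd0, hdS⟩ : ∃ d ∈ nonZeroDivisors R, ∀ s : S,
      algebraMap R (FractionRing R) d * (s : FractionRing R) ∈ Rimg R := by
    obtain ⟨n, v, hv⟩ := Module.Finite.exists_fin (R := R) (M := S)
    obtain ⟨b, hb⟩ := IsLocalization.exist_integer_multiples_of_finite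
      (nonZeroDivisors R) (fun i : Fin n => ((v i : FractionRing R)))
    refine ⟨(b : R), b.2, ?_⟩
    have hsub : Submodule.span R (Set.range v) ≤
        Submodule.comap ((b : R) • σ) (Rimg R) := by
      rw [Submodule.span_le]
      rintro _ ⟨i, rfl⟩
      obtain ⟨x, hx⟩ := hb i
      refine Submodule.mem_comap.mpr ⟨x, ?_⟩
      simpa [Algebra.smul_def, hσ] using hx
    intro s
    have hmem : s ∈ Submodule.span R (Set.range v) := hv ▸ Submodule.mem_top
    have h2 := Submodule.mem_comap.mp (hsub hmem)
    simpa [Algebra.smul_def, hσ] using h2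
  have hdI : d ∈ condI S := hdS
  -- generators of the conductor ideal, including `d`
  obtain ⟨T, hT⟩ : (condI S).FG := IsNoetherian.noetherian (condI S)
  set T' : Finset R := insert d T with hT'def
  have hT'sub : ∀ t ∈ T', t ∈ condI S := by
    intro t ht
    rcases Finset.mem_insert.mp ht with h | h
    · exact h ▸ hdI
    · exact hT ▸ Ideal.subset_span h
  have hT'span : condI S ≤ Ideal.span (T' : Set R) := by
    rw [← hT]
    apply Ideal.span_mono
    intro t ht
    exact Finset.mem_insert_of_mem ht
  have hdT' : d ∈ T' := Finset.mem_insert_self d T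
  -- the index type
  set κ := (Fin a × {t : R // t ∈ T'} : Type u) with hκdef
  haveI hκfin : Fintype κ := by rw [hκdef]; infer_instance
  -- the coordinate maps of the embedding M → R^κ
  set A1 : M →ₗ[R] (Fin a → S) := f.restrictScalars R with hA1
  set B : κ → (M →ₗ[R] FractionRing R) :=
    fun p => (p.2.1 : R) • (σ ∘ₗ (LinearMap.proj p.1) ∘ₗ A1) with hB
  have hBval : ∀ p m, B p m = algebraMap R (FractionRing R) (p.2.1)
      * ((f m p.1 : S) : FractionRing R) := by
    intro p m
    simp [hB, Algebra.smul_def, hA1, hσ]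
  have hBmem : ∀ p m, B p m ∈ Rimg R := by
    intro p m
    rw [hBval]
    exact hT'sub p.2.1 p.2.2 (f m p.1)
  set F : M →ₗ[R] (κ → R) := LinearMap.pi (fun p => resR (B p) (hBmem p)) with hF
  have hFval : ∀ (m : M) (p : κ), algebraMap R (FractionRing R) (F m p)
      = algebraMap R (FractionRing R) (p.2.1)
        * ((f m p.1 : S) : FractionRing R) := by
    intro m p
    have h1 : F m p = resR (B p) (hBmem p) m := rfl
    rw [h1, resR_spec, hBval]
  -- injectivity of `F`
  have hdu : IsUnit (algebraMap R (FractionRing R) d) :=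
    IsLocalization.map_units (FractionRing R) ⟨d, hd0⟩
  have hFinj : Function.Injective F := by
    rw [injective_iff_map_eq_zero]
    intro m hm
    have hcoords : ∀ i, σ (f m i) = 0 := by
      intro i
      have h1 := hFval m ⟨i, ⟨d, hdT'⟩⟩
      rw [show F m (⟨i, ⟨d, hdT'⟩⟩ : κ) = 0 from congrFun hm _, map_zero] at h1
      rw [hσ, hdu.mul_right_eq_zero.mp h1.symm]
    have hfm : f m = 0 := funext fun i => hσinj (by rw [hcoords i]; simp)
    exact hf (by rw [hfm, map_zero])
  -- saturation of the image of `F`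
  have hsat : ∀ r ∈ nonZeroDivisors R, ∀ x : κ → R,
      r • x ∈ LinearMap.range F → x ∈ LinearMap.range F := by
    intro r hr x hx
    obtain ⟨m, hm⟩ := hx
    obtain ⟨u, hu'⟩ : IsUnit (algebraMap R (FractionRing R) r) :=
      IsLocalization.map_units (FractionRing R) ⟨r, hr⟩
    have hcoord : ∀ p : κ, algebraMap R (FractionRing R) (p.2.1)
        * ((f m p.1 : S) : FractionRing R)
        = algebraMap R (FractionRing R) r * algebraMap R (FractionRing R) (x p) := by
      intro p
      rw [← hFval m p, hm]
      have : (r • x) p = r * x p := rfl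
      rw [this, map_mul]
    -- the element (1/r) • f m has coordinates in S
    have hyS : ∀ i : Fin a, ∃ z : S, (z : FractionRing R)
        = (↑u⁻¹ : FractionRing R) * ((f m i : S) : FractionRing R) := by
      intro i
      set q : FractionRing R := (↑u⁻¹ : FractionRing R) * ((f m i : S) : FractionRing R)
        with hqdef
      apply exists_mem_of_cond S hrefl d hd0 hdS
      intro t ht
      have hspan : Ideal.span (T' : Set R) ≤
          Submodule.comap (q • (Algebra.linearMap R (FractionRing R))) (Rimg R) := by
        rw [Ideal.span_le]
        intro t' ht'
        refine Submodule.mem_comap.mpr ⟨x (⟨i, ⟨t', ht'⟩⟩ : κ), ?_⟩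
        have h2 := hcoord (⟨i, ⟨t', ht'⟩⟩ : κ)
        have h3 : (q • Algebra.linearMap R (FractionRing R)) t'
            = (↑u⁻¹ : FractionRing R) * (algebraMap R (FractionRing R) t'
              * ((f m i : S) : FractionRing R)) := by
          simp only [LinearMap.smul_apply, Algebra.linearMap_apply, smul_eq_mul, hqdef]
          ring
        rw [h3, h2, ← hu', ← mul_assoc, Units.inv_mul, one_mul]
        exact Algebra.linearMap_apply R (FractionRing R) _
      have h4 := Submodule.mem_comap.mp (hspan (hT'span ht))
      simpa [smul_eq_mul, mul_comm] using h4
    choose z hz using hyS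
    have hrz : (algebraMap R S r) • z = f m := by
      funext i
      apply hσinj
      have h5 : σ (((algebraMap R S r) • z) i) = ((algebraMap R S r : S) : FractionRing R)
          * ((z i : S) : FractionRing R) := by
        simp [hσ, Pi.smul_apply, smul_eq_mul]
      have h6 : ((algebraMap R S r : S) : FractionRing R)
          = algebraMap R (FractionRing R) r := by
        rw [Algebra.algebraMap_eq_smul_one]
        have : (((r • (1 : S)) : S) : FractionRing R) = r • ((1 : S) : FractionRing R) := rfl
        rw [this, OneMemClass.coe_one, Algebra.smul_def, mul_one]
      rw [h5, h6, hz i, hσ, ← hu', ← mul_assoc, Units.mul_inv, one_mul]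
    have hrnzd : algebraMap R S r ∈ nonZeroDivisors S := by
      rw [mem_nonZeroDivisors_iff_right]
      intro w hw
      apply hσinj
      rw [hσ, map_zero]
      have h7 : ((w * algebraMap R S r : S) : FractionRing R) = 0 := by
        rw [hw]; rfl
      have h8 : ((w : S) : FractionRing R) * algebraMap R (FractionRing R) r = 0 := by
        rw [← h7]
        have h6 : ((algebraMap R S r : S) : FractionRing R)
            = algebraMap R (FractionRing R) r := by
          rw [Algebra.algebraMap_eq_smul_one]
          have : (((r • (1 : S)) : S) : FractionRing R) = r • ((1 : S) : FractionRing R) := rfl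
          rw [this, OneMemClass.coe_one, Algebra.smul_def, mul_one]
        rw [← h6]; rfl
      rw [← hu'] at h8
      exact (Units.mul_left_eq_zero u).mp (by rw [← h8])
    have hfm0 : g (f m) = 0 := by
      have : f m ∈ LinearMap.ker g := hfg ▸ LinearMap.mem_range_self f m
      exact this
    have hgz : g z = 0 := by
      apply hNtf _ hrnzd
      rw [← map_smul, hrz, hfm0]
    have hzker : z ∈ LinearMap.range f := by
      rw [hfg]
      exact hgz
    obtain ⟨m', hm'⟩ := hzker
    refine ⟨m', ?_⟩
    funext p
    apply IsFractionRing.injective R (FractionRing R)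
    rw [hFval m' p, hm', hz p.1]
    have h9 := hcoord p
    calc algebraMap R (FractionRing R) (p.2.1)
        * ((↑u⁻¹ : FractionRing R) * ((f m p.1 : S) : FractionRing R))
        = (↑u⁻¹ : FractionRing R) * (algebraMap R (FractionRing R) (p.2.1)
            * ((f m p.1 : S) : FractionRing R)) := by ring
      _ = (↑u⁻¹ : FractionRing R) * (algebraMap R (FractionRing R) r
            * algebraMap R (FractionRing R) (x p)) := by rw [h9]
      _ = algebraMap R (FractionRing R) (x p) := by
            rw [← hu', ← mul_assoc, Units.inv_mul, one_mul]
  -- repackage over `Fin c`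
  set c : ℕ := Fintype.card κ with hc
  set e0 : Fin c ≃ κ := (Fintype.equivFin κ).symm with he0
  set ε : (κ → R) ≃ₗ[R] (Fin c → R) := LinearEquiv.funCongrLeft R R e0 with hε
  set F' : M →ₗ[R] (Fin c → R) := ε.toLinearMap ∘ₗ F with hF'
  have hF'inj : Function.Injective F' := by
    intro m m' h
    exact hFinj (ε.injective.eq_iff.mp (by exact h))
  set W : Submodule R (Fin c → R) := LinearMap.range F' with hW
  have hsat' : ∀ r ∈ nonZeroDivisors R, ∀ x : Fin c → R, r • x ∈ W → x ∈ W := by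
    intro r hr x hx
    obtain ⟨m, hm⟩ := hx
    have h1 : F m = ε.symm (r • x) := by
      apply ε.injective
      rw [ε.apply_symm_apply]
      exact hm
    rw [map_smul] at h1
    obtain ⟨m', hm'⟩ := hsat r hr (ε.symm x) ⟨m, h1⟩
    refine ⟨m', ?_⟩
    show ε (F m') = x
    rw [hm', ε.apply_symm_apply]
  refine ⟨c, (Fin c → R) ⧸ W, inferInstance, inferInstance, ?_, ?_, F', W.mkQ, hF'inj,
    Submodule.mkQ_surjective W, ?_⟩
  · infer_instance
  · intro r hr y hy
    obtain ⟨x, rfl⟩ := Submodule.mkQ_surjective W y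
    have h1 : W.mkQ (r • x) = 0 := by rw [map_smul, hy]
    have h2 : r • x ∈ W := (Submodule.Quotient.mk_eq_zero W).mp h1
    have h3 : x ∈ W := hsat' r hr x h2
    exact (Submodule.Quotient.mk_eq_zero W).mpr h3
  · rw [Submodule.ker_mkQ]
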